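/- Let G be a chordal graph. Then G is strictly chordal (i.e., gem-free and dart-free) if and only if any two distinct minimal vertex separators of G are disjoint. -/

import Mathlib

open SimpleGraph Matrix

/-- `S` separates `u` and `v` in `G`: every walk from `u` to `v` meets `S`. -/
def Separates {V : Type*} (G : SimpleGraph V) (u v : V) (S : Set V) : Prop :=
  ∀ p : G.Walk u v, ∃ x ∈ p.support, x ∈ S

/-- `S` is a minimal `uv`-separator. -/
def IsMinimalUVSeparator {V : Type*} (G : SimpleGraph V) (u v : V) (S : Set V) : Prop :=
  u ≠ v ∧ ¬ G.Adj u v ∧ u ∉ S ∧ v ∉ S ∧ Separates G u v S ∧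
    ∀ S' ⊂ S, ¬ Separates G u v S'

/-- `S` is a minimal vertex separator: a minimal `uv`-separator for some non-adjacent pair. -/
def IsMinimalVertexSeparator {V : Type*} (G : SimpleGraph V) (S : Set V) : Prop :=
  ∃ u v, IsMinimalUVSeparator G u v S

/-- `G` is chordal: it has no induced cycle of length at least 4. -/
def Chordal {V : Type*} (G : SimpleGraph V) : Prop :=
  ∀ n, 4 ≤ n → ¬ ∃ f : Fin n ↪ V, ∀ a b, (SimpleGraph.cycleGraph n).Adj a b ↔ G.Adj (f a) (f b)

/-- `G` is strictly chordal: chordal with pairwise disjoint minimal vertex separators. -/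
def StrictlyChordal {V : Type*} (G : SimpleGraph V) : Prop :=
  Chordal G ∧ ∀ S S' : Set V, IsMinimalVertexSeparator G S →
    IsMinimalVertexSeparator G S' → S ≠ S' → Disjoint S S'
/-- `Q` is a maximal clique of `G`. -/
def IsMaxClique {V : Type*} (G : SimpleGraph V) (Q : Set V) : Prop :=
  G.IsClique Q ∧ ∀ Q', G.IsClique Q' → Q ⊆ Q' → Q = Q'

/-- `v` is a simplicial vertex of `G`. -/
def IsSimplicial {V : Type*} (G : SimpleGraph V) (v : V) : Prop :=
  G.IsClique (G.neighborSet v)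

/-- `Q` is a boundary clique of `G`. -/
def IsBoundaryClique {V : Type*} (G : SimpleGraph V) (Q : Set V) : Prop :=
  IsMaxClique G Q ∧ ∃ Q', IsMaxClique G Q' ∧ Q' ≠ Q ∧
    Q ∩ Q' = {v ∈ Q | ¬ IsSimplicial G v}
/-- The gem: a path on vertices 0-1-2-3 plus a vertex 4 adjacent to all four. -/
def gem : SimpleGraph (Fin 5) :=
  SimpleGraph.fromRel (fun a b =>
    (a, b) ∈ [((0 : Fin 5), (1 : Fin 5)), (1, 2), (2, 3), (4, 0), (4, 1), (4, 2), (4, 3)])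

/-- The dart: `K₄` minus the edge `{2,3}` on vertices 0-3, plus vertex 4 adjacent to the
degree-3 vertex 0. -/
def dart : SimpleGraph (Fin 5) :=
  SimpleGraph.fromRel (fun a b =>
    (a, b) ∈ [((0 : Fin 5), (1 : Fin 5)), (0, 2), (0, 3), (1, 2), (1, 3), (4, 0)])

/-- `G` has no induced subgraph isomorphic to `H`. -/
def FreeOf {V : Type*} (G : SimpleGraph V) (H : SimpleGraph (Fin 5)) : Prop :=
  ¬ ∃ f : Fin 5 ↪ V, ∀ a b, H.Adj a b ↔ G.Adj (f a) (f b)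

section AuxSection
variable {V : Type*} {G : SimpleGraph V}

/-- connectivity avoiding `S` -/
def Reach (G : SimpleGraph V) (S : Set V) (a b : V) : Prop :=
  ∃ p : G.Walk a b, ∀ z ∈ p.support, z ∉ S

lemma Reach.refl {S : Set V} {a : V} (ha : a ∉ S) : Reach G S a a :=
  ⟨SimpleGraph.Walk.nil, by simp [ha]⟩

lemma Reach.symm {S : Set V} {a b : V} (h : Reach G S a b) : Reach G S b a := by
  obtain ⟨p, hp⟩ := h
  exact ⟨p.reverse, by simpa using hp⟩

lemma Reach.trans {S : Set V} {a b c : V} (h : Reach G S a b) (h' : Reach G S b c) :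
    Reach G S a c := by
  obtain ⟨p, hp⟩ := h; obtain ⟨q, hq⟩ := h'
  refine ⟨p.append q, ?_⟩
  intro z hz
  rcases (SimpleGraph.Walk.mem_support_append_iff _ _).1 hz with h | h
  · exact hp z h
  · exact hq z h

lemma Reach.not_mem {S : Set V} {a b : V} (h : Reach G S a b) : b ∉ S := by
  obtain ⟨p, hp⟩ := h; exact hp b p.end_mem_support

lemma Reach.not_mem' {S : Set V} {a b : V} (h : Reach G S a b) : a ∉ S := by
  obtain ⟨p, hp⟩ := h; exact hp a p.start_mem_support

lemma Reach.adj {S : Set V} {a b c : V} (h : Reach G S a b) (hbc : G.Adj b c) (hc : c ∉ S) :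
    Reach G S a c :=
  h.trans ⟨hbc.toWalk, by simp [h.not_mem, hc]⟩

lemma Separates.symm {u v : V} {S : Set V} (h : Separates G u v S) : Separates G v u S := by
  intro p
  obtain ⟨x, hx, hxS⟩ := h p.reverse
  exact ⟨x, by simpa using hx, hxS⟩

lemma IsMinimalUVSeparator.symm {u v : V} {S : Set V} (h : IsMinimalUVSeparator G u v S) :
    IsMinimalUVSeparator G v u S := by
  obtain ⟨h1, h2, h3, h4, h5, h6⟩ := h
  exact ⟨h1.symm, fun h => h2 h.symm, h4, h3, h5.symm, fun S' hS' hsep => h6 S' hS' hsep.symm⟩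

/-- two sides of a separator can't reach each other / be adjacent -/
lemma sep_reach {u v z : V} {S : Set V} (hsep : Separates G u v S)
    (h1 : Reach G S u z) (h2 : Reach G S v z) : False := by
  obtain ⟨p, hp⟩ := h1.trans h2.symm
  obtain ⟨x, hx, hxS⟩ := hsep p
  exact hp x hx hxS

lemma sep_reach_adj {u v z w : V} {S : Set V} (hsep : Separates G u v S)
    (h1 : Reach G S u z) (h2 : Reach G S v w) (hzw : G.Adj z w) : False :=
  sep_reach hsep (h1.adj hzw h2.not_mem) h2

/-- every vertex on an S-avoiding walk from `w` is reachable from `w` avoiding `S` -/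
lemma reach_of_mem_support {w c : V} {S : Set V} (p : G.Walk w c)
    (hp : ∀ z ∈ p.support, z ∉ S) {z : V} (hz : z ∈ p.support) : Reach G S w z := by
  classical
  exact ⟨p.takeUntil z hz, fun y hy => hp y (SimpleGraph.Walk.support_takeUntil_subset _ _ hy)⟩

/-- helper: walk from u meeting S\{x} nowhere but passing through x gives a neighbor of x
reachable from u -/
lemma neighbor_helper {S : Set V} {x u : V} (hx : x ∈ S) :
    ∀ {v : V} (p : G.Walk u v), (∀ z ∈ p.support, z ∉ S \ {x}) → x ∈ p.support → u ∉ S →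
      ∃ c, Reach G S u c ∧ G.Adj c x := by
  intro v p
  induction p with
  | nil =>
    intro _ h2 hu
    simp only [SimpleGraph.Walk.support_nil, List.mem_singleton] at h2
    exact absurd hx (h2 ▸ hu)
  | @cons a b c h q ih =>
    intro h1 h2 hu
    by_cases hxb : x = b
    · exact ⟨a, Reach.refl hu, by rwa [hxb]⟩
    · have hb : b ∉ S := by
        have hb' := h1 b (by simp)
        simp only [Set.mem_diff, Set.mem_singleton_iff, not_and, not_not] at hb'
        intro hbS
        exact hxb ((hb' hbS).symm)
      have hxq : x ∈ q.support := by
        rw [SimpleGraph.Walk.support_cons, List.mem_cons] at h2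
        rcases h2 with hh | hh
        · exact absurd hx (hh ▸ hu)
        · exact hh
      obtain ⟨d, hd, hdx⟩ := ih (fun z hz => h1 z (by simp [hz])) hxq hb
      refine ⟨d, ?_, hdx⟩
      exact (Reach.adj (Reach.refl hu) h hb).trans hd

/-- F1: each vertex of a minimal uv-separator has a neighbor in the u-side component -/
lemma sep_vertex_neighbor {u v x : V} {S : Set V}
    (hmin : IsMinimalUVSeparator G u v S) (hx : x ∈ S) :
    ∃ c, Reach G S u c ∧ G.Adj c x := by
  obtain ⟨hne, hadj, hu, hv, hsep, hminl⟩ := hmin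
  have hss : S \ {x} ⊂ S := Set.sdiff_singleton_ssubset.2 hx
  have := hminl _ hss
  rw [Separates] at this
  push_neg at this
  obtain ⟨p, hp⟩ := this
  have hxp : x ∈ p.support := by
    obtain ⟨z, hz, hzS⟩ := hsep p
    have := hp z hz
    simp only [Set.mem_diff, Set.mem_singleton_iff, not_and, not_not] at this
    exact (this hzS) ▸ hz
  exact neighbor_helper hx p hp hxp hu

/-- any uv-separator contains every common neighbor of u and v -/
lemma common_neighbor_mem {u v z : V} {S : Set V} (hsep : Separates G u v S)
    (hu : u ∉ S) (hv : v ∉ S) (h1 : G.Adj u z) (h2 : G.Adj z v) : z ∈ S := by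
  obtain ⟨w, hw, hwS⟩ := hsep (SimpleGraph.Walk.cons h1 h2.toWalk)
  simp only [SimpleGraph.Walk.support_cons, SimpleGraph.Walk.support_nil, List.mem_cons,
    List.not_mem_nil, or_false] at hw
  rcases hw with rfl | rfl | rfl
  · exact absurd hwS hu
  · exact hwS
  · exact absurd hwS hv

/-- the neighborhood of v separates u from v when u is not adjacent to v -/
lemma neighborSet_separates {u v : V} (hne : u ≠ v) (hadj : ¬ G.Adj u v) :
    Separates G u v (G.neighborSet v) := by
  intro p
  obtain ⟨w, hw, q, hq⟩ := SimpleGraph.Walk.exists_eq_cons_of_ne (Ne.symm hne) p.reverse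
  have hwsupp : w ∈ p.support := by
    have : w ∈ p.reverse.support := by rw [hq]; simp
    rwa [SimpleGraph.Walk.support_reverse, List.mem_reverse] at this
  exact ⟨w, hwsupp, hw⟩

/-- Zorn: any separator (with endpoints outside) contains a minimal uv-separator -/
lemma exists_minimal_separator {u v : V} {S0 : Set V} (hne : u ≠ v) (hadj : ¬ G.Adj u v)
    (hsep : Separates G u v S0) (hu : u ∉ S0) (hv : v ∉ S0) :
    ∃ S ⊆ S0, IsMinimalUVSeparator G u v S := by
  have hchains : ∀ c ⊆ {T | T ⊆ S0 ∧ Separates G u v T}, IsChain (· ⊆ ·) c → c.Nonempty →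
      ∃ lb ∈ {T | T ⊆ S0 ∧ Separates G u v T}, ∀ s ∈ c, lb ⊆ s := ?_
  obtain ⟨S, hSS0, hSmin⟩ := zorn_superset_nonempty
    {T | T ⊆ S0 ∧ Separates G u v T} hchains S0 ⟨subset_rfl, hsep⟩
  · refine ⟨S, hSmin.prop.1, hne, hadj, fun h => hu (hSmin.prop.1 h),
      fun h => hv (hSmin.prop.1 h), hSmin.prop.2, ?_⟩
    intro S' hS' hsepS'
    have hmem : S' ∈ {T | T ⊆ S0 ∧ Separates G u v T} := ⟨hS'.1.trans hSmin.prop.1, hsepS'⟩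
    exact hS'.2 (hSmin.2 hmem hS'.1)
  · -- chains
    intro c hc hchain hcne
    refine ⟨⋂₀ c, ⟨(Set.sInter_subset_of_mem hcne.some_mem).trans (hc hcne.some_mem).1, ?_⟩,
      fun s hs => Set.sInter_subset_of_mem hs⟩
    intro p
    classical
    set I : Set (Set V) := (fun s => {z | z ∈ p.support ∧ z ∈ s}) '' c with hI
    have hIfin : I.Finite := by
      apply Set.Finite.subset (Set.Finite.finite_subsets (List.finite_toSet p.support))
      rintro t ⟨s, hs, rfl⟩
      intro z hz
      exact hz.1
    have hIne : I.Nonempty := ⟨_, Set.mem_image_of_mem _ hcne.some_mem⟩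
    obtain ⟨t, htI, htmin⟩ : ∃ t ∈ I, ∀ t' ∈ I, id t' ≤ id t → id t = id t' := by
      obtain ⟨t, htI, htmin⟩ := Set.Finite.exists_minimalFor id I hIfin hIne
      exact ⟨t, htI, fun t' ht' hle => le_antisymm (htmin ht' hle) hle⟩
    obtain ⟨s, hsc, rfl⟩ := htI
    obtain ⟨z, hzsupp, hzs⟩ := (hc hsc).2 p
    refine ⟨z, hzsupp, ?_⟩
    rw [Set.mem_sInter]
    intro s' hs'c
    rcases hchain.total hsc hs'c with h | h
    · exact h hzs
    · have hsub : {w | w ∈ p.support ∧ w ∈ s'} ⊆ {w | w ∈ p.support ∧ w ∈ s} :=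
        fun w hw => ⟨hw.1, h hw.2⟩
      have heq := htmin _ (Set.mem_image_of_mem _ hs'c) hsub
      simp only [id] at heq
      have : z ∈ {w | w ∈ p.support ∧ w ∈ s'} := heq.symm ▸ (⟨hzsupp, hzs⟩ :
        z ∈ {w | w ∈ p.support ∧ w ∈ s})
      exact this.2

/-! ### Lists: induced paths via minimal good lists -/

/-- a walk-list from x to y whose interior lies in C -/
def Good (G : SimpleGraph V) (x y : V) (C : Set V) (l : List V) : Prop :=
  ∃ h2 : 2 ≤ l.length,
    l[0]'(by omega) = x ∧ l[l.length - 1]'(by omega) = y ∧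
    (∀ i (h0 : 0 < i) (hi : i < l.length - 1), l[i]'(by omega) ∈ C) ∧
    (∀ i (hi : i + 1 < l.length), G.Adj (l[i]'(by omega)) (l[i+1]'hi))

lemma splice_length {l : List V} {k j : ℕ} (hkj : k ≤ j) (hj : j ≤ l.length) :
    (l.take k ++ l.drop j).length = k + (l.length - j) := by
  simp [List.length_take]; omega

lemma splice_get_lt {l : List V} {k j i : ℕ} (hik : i < k) (hkj : k ≤ j) (hj : j ≤ l.length)
    (h1 : i < (l.take k ++ l.drop j).length) :
    (l.take k ++ l.drop j)[i] = l[i]'(by omega) := by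
  rw [List.getElem_append_left (by simp [List.length_take]; omega)]
  exact List.getElem_take

lemma splice_get_ge {l : List V} {k j i : ℕ} (hik : k ≤ i) (hkj : k ≤ j) (hj : j ≤ l.length)
    (h1 : i < (l.take k ++ l.drop j).length) :
    (l.take k ++ l.drop j)[i] = l[j + (i - k)]'(by
      have := splice_length hkj hj; omega) := by
  have hlen : (l.take k).length = k := by simp [List.length_take]; omega
  have h2 : (l.take k).length ≤ i := by omega
  rw [List.getElem_append_right h2]
  have := splice_length hkj hj
  simp only [hlen]
  rw [List.getElem_drop ..]

lemma good_surgery {x y : V} {C : Set V} {l : List V} (hl : Good G x y C l)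
    {k j : ℕ} (hkj : k < j) (hj : j < l.length)
    (hk2 : 2 ≤ k + (l.length - j))
    (hlink : 0 < k → G.Adj (l[k-1]'(by omega)) (l[j]'hj))
    (hk0 : k = 0 → l[j]'hj = x) :
    ∃ l', Good G x y C l' ∧ l'.length = k + (l.length - j) := by
  obtain ⟨h2, hx, hy, hC, hadj⟩ := hl
  have hkj' : k ≤ j := le_of_lt hkj
  have hj' : j ≤ l.length := le_of_lt hj
  have hlen := splice_length (l := l) hkj' hj'
  refine ⟨l.take k ++ l.drop j, ⟨by omega, ?_, ?_, ?_, ?_⟩, hlen⟩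
  · -- head
    rcases Nat.eq_zero_or_pos k with hk | hk
    · rw [splice_get_ge (by omega) hkj' hj' (by omega)]
      have := hk0 hk
      convert this using 2
      omega
    · rw [splice_get_lt hk hkj' hj' (by omega)]
      exact hx
  · -- last
    rw [splice_get_ge (by omega) hkj' hj' (by omega)]
    convert hy using 2
    omega
  · -- interior
    intro i h0 hi
    rcases Nat.lt_or_ge i k with hik | hik
    · rw [splice_get_lt hik hkj' hj' (by omega)]
      exact hC i h0 (by omega)
    · rw [splice_get_ge hik hkj' hj' (by omega)]
      exact hC _ (by omega) (by omega)
  · -- chain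
    intro i hi
    rcases Nat.lt_or_ge (i+1) k with hik | hik
    · rw [splice_get_lt (by omega) hkj' hj' (by omega),
        splice_get_lt hik hkj' hj' (by omega)]
      exact hadj i (by omega)
    · rcases Nat.lt_or_ge i k with hik2 | hik2
      · -- i+1 = k
        have hik3 : i + 1 = k := by omega
        rw [splice_get_lt hik2 hkj' hj' (by omega),
          splice_get_ge hik hkj' hj' (by omega)]
        have := hlink (by omega)
        convert this using 2 <;> omega
      · rw [splice_get_ge hik2 hkj' hj' (by omega),
          splice_get_ge hik hkj' hj' (by omega)]
        have := hadj (j + (i - k)) (by omega)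
        convert this using 2
        omega


lemma cycleGraph_adj_lt {n : ℕ} {a b : Fin n} (hab : a.val < b.val) :
    (SimpleGraph.cycleGraph n).Adj a b ↔ (b.val = a.val + 1 ∨ (a.val = 0 ∧ b.val = n - 1)) := by
  have hn : 0 < n := lt_of_le_of_lt (Nat.zero_le _) b.isLt
  rw [SimpleGraph.cycleGraph_adj']
  have h1 : (a - b).val = (n - b.val + a.val) % n := by rw [Fin.sub_def]
  have h2 : (b - a).val = (n - a.val + b.val) % n := by rw [Fin.sub_def]
  have hb := b.isLt
  have ha := a.isLt
  have e1 : (n - b.val + a.val) % n = n - b.val + a.val :=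
    Nat.mod_eq_of_lt (by omega)
  have e2 : (n - a.val + b.val) % n = b.val - a.val := by
    have : n - a.val + b.val = (b.val - a.val) + n := by omega
    rw [this, Nat.add_mod_right]
    exact Nat.mod_eq_of_lt (by omega)
  rw [h1, h2, e1, e2]
  omega

lemma cycleGraph_adj_iff {n : ℕ} (hn : 4 ≤ n) (a b : Fin n) :
    (SimpleGraph.cycleGraph n).Adj a b ↔
      ((a.val < b.val ∧ (b.val = a.val + 1 ∨ (a.val = 0 ∧ b.val = n - 1))) ∨
       (b.val < a.val ∧ (a.val = b.val + 1 ∨ (b.val = 0 ∧ a.val = n - 1)))) := by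
  rcases lt_trichotomy a.val b.val with h | h | h
  · rw [cycleGraph_adj_lt h]
    omega
  · have hab : a = b := Fin.ext h
    subst hab
    exact iff_of_false (SimpleGraph.irrefl _) (by omega)
  · rw [SimpleGraph.adj_comm, cycleGraph_adj_lt h]
    omega

/-- a chordless cycle (as a list) contradicts chordality -/
lemma chordal_no_cycle (hch : Chordal G) (L : List V) (h4 : 4 ≤ L.length)
    (hnd : ∀ i j (hj : j < L.length) (hij : i < j), L[i]'(by omega) ≠ L[j]'hj)
    (hadj : ∀ i (hi : i + 1 < L.length), G.Adj (L[i]'(by omega)) (L[i+1]'hi))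
    (hwrap : G.Adj (L[L.length - 1]'(by omega)) (L[0]'(by omega)))
    (hchord : ∀ i j (hj : j < L.length) (hij : i < j) (h1 : j ≠ i + 1)
      (h2 : ¬(i = 0 ∧ j = L.length - 1)), ¬ G.Adj (L[i]'(by omega)) (L[j]'hj)) : False := by
  set n := L.length with hn
  apply hch n h4
  refine ⟨⟨fun i => L[i.val]'(i.isLt), ?_⟩, ?_⟩
  · intro a b hab
    by_contra hne
    rcases lt_trichotomy a.val b.val with h | h | h
    · exact hnd a.val b.val b.isLt h hab
    · exact hne (Fin.ext h)
    · exact hnd b.val a.val a.isLt h hab.symm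
  · intro a b
    change (SimpleGraph.cycleGraph n).Adj a b ↔ G.Adj (L[a.val]'a.isLt) (L[b.val]'b.isLt)
    rw [cycleGraph_adj_iff h4]
    constructor
    · rintro (⟨hlt, h1 | ⟨h1, h2⟩⟩ | ⟨hlt, h1 | ⟨h1, h2⟩⟩)
      · have := hadj a.val (by omega)
        convert this using 2 <;> omega
      · have := hwrap.symm
        convert this using 2 <;> omega
      · have := (hadj b.val (by omega)).symm
        convert this using 2 <;> omega
      · have := hwrap
        convert this using 2 <;> omega
    · intro hGadj
      rcases lt_trichotomy a.val b.val with h | h | h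
      · by_contra hcyc
        push_neg at hcyc
        exact hchord a.val b.val b.isLt h (by omega) (by omega) hGadj
      · exact absurd hGadj (Fin.ext h ▸ G.irrefl)
      · by_contra hcyc
        push_neg at hcyc
        exact hchord b.val a.val a.isLt h (by omega) (by omega) hGadj.symm

lemma gei {l : List V} {i j : ℕ} (h : i = j) (hi : i < l.length) :
    l[i] = l[j]'(h ▸ hi) := by subst h; rfl

lemma exists_good {S : Set V} {w x y c1 c2 : V} (h1 : Reach G S w c1) (hx : G.Adj c1 x)
    (h2 : Reach G S w c2) (hy : G.Adj c2 y) :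
    ∃ l, Good G x y {z | Reach G S w z} l ∧ 3 ≤ l.length := by
  obtain ⟨q, hq⟩ := h1.symm.trans h2
  have hsupp : 1 ≤ q.support.length := List.length_pos_iff.2 q.support_ne_nil
  have hlen : (x :: (q.support ++ [y])).length = q.support.length + 2 := by simp
  have hget : ∀ i (hi : 1 ≤ i) (hi2 : i ≤ q.support.length)
      (h : i < (x :: (q.support ++ [y])).length),
      (x :: (q.support ++ [y]))[i] = q.support[i-1]'(by omega) := by
    intro i hi hi2 h
    rcases Nat.exists_eq_add_of_le hi with ⟨m, rfl⟩
    simp only [Nat.add_comm 1 m, List.getElem_cons_succ]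
    rw [List.getElem_append_left (by omega)]
    exact gei (by omega) (by omega)
  refine ⟨x :: (q.support ++ [y]), ⟨by omega, by simp, ?_, ?_, ?_⟩, by omega⟩
  · -- last = y
    rw [gei (show (x :: (q.support ++ [y])).length - 1 = q.support.length + 1 by omega)]
    simp only [List.getElem_cons_succ]
    rw [List.getElem_append_right (by omega)]
    simp
  · -- interior
    intro i h0 hi
    rw [hget i h0 (by omega)]
    have hmem : q.support[i-1]'(by omega) ∈ q.support := List.getElem_mem _
    exact h1.trans (reach_of_mem_support q hq hmem)
  · -- chain
    intro i hi
    rcases Nat.eq_zero_or_pos i with rfl | h0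
    · simp only [List.getElem_cons_zero]
      rw [hget 1 le_rfl (by omega)]
      have : q.support[0]'(by omega) = c1 := by
        rw [gei (rfl : (0:ℕ) = 0), List.getElem_zero]
        exact q.head_support
      rw [this]
      exact hx.symm
    · rcases Nat.lt_or_ge (i+1) ((x :: (q.support ++ [y])).length - 1) with hi1 | hi1
      · rw [hget i h0 (by omega), hget (i+1) (by omega) (by omega)]
        have hchain := SimpleGraph.Walk.isChain_adj_support q
        rw [List.isChain_iff_getElem] at hchain
        have := hchain (i-1) (by omega)
        convert this using 2
        omega
      · -- i+1 is the last position
        have hieq : i = q.support.length := by omega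
        rw [hget i h0 (by omega),
          gei (show i + 1 = q.support.length + 1 by omega)]
        simp only [List.getElem_cons_succ]
        rw [List.getElem_append_right (by omega)]
        have : q.support[i-1]'(by omega) = c2 := by
          rw [gei (show i - 1 = q.support.length - 1 by omega)]
          rw [← List.getLast_eq_getElem]
          exact q.getLast_support
        rw [this]
        simpa using hy

lemma exists_min_good3 {x y : V} {C : Set V} (hxy : x ≠ y) (hxC : x ∉ C) (hyC : y ∉ C)
    (hex : ∃ l, Good G x y C l ∧ 3 ≤ l.length) :
    ∃ l, (Good G x y C l ∧ 3 ≤ l.length) ∧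
      (∀ i j (hj : j < l.length) (hij : i < j) (hne : j ≠ i + 1)
        (hw : ¬(i = 0 ∧ j = l.length - 1)), ¬ G.Adj (l[i]'(by omega)) (l[j]'hj)) ∧
      (∀ i j (hj : j < l.length) (hij : i < j), l[i]'(by omega) ≠ l[j]'hj) := by
  have hexn : ∃ n, ∃ l, (Good G x y C l ∧ 3 ≤ l.length) ∧ l.length = n := by
    obtain ⟨l, hl⟩ := hex; exact ⟨l.length, l, hl, rfl⟩
  classical
  obtain ⟨l, hl, hlen⟩ := Nat.find_spec hexn
  have hminl : ∀ l', Good G x y C l' → 3 ≤ l'.length → l'.length < l.length → False := by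
    intro l' hl' h3 hlt
    exact Nat.find_min hexn (by omega) ⟨l', ⟨hl', h3⟩, rfl⟩
  obtain ⟨hgood, h3⟩ := hl
  obtain ⟨h2, hx, hy, hC, hadj⟩ := hgood
  have hgood : Good G x y C l := ⟨h2, hx, hy, hC, hadj⟩
  refine ⟨l, ⟨hgood, h3⟩, ?_, ?_⟩
  · -- chordless outside wrap pair
    intro i j hj hij hne hw hadj'
    have hij1 : i + 1 < j := by omega
    have hk2 : 3 ≤ (i+1) + (l.length - j) := by
      rcases Nat.eq_zero_or_pos i with rfl | h0
      · have : j ≠ l.length - 1 := fun h => hw ⟨rfl, h⟩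
        omega
      · omega
    obtain ⟨l', hl', hlt⟩ := good_surgery hgood (k := i+1) hij1 hj (by omega)
      (fun _ => by convert hadj' using 2 <;> omega) (fun h => absurd h (by omega))
    exact hminl l' hl' (by omega) (by omega)
  · -- nodup
    intro i j hj hij heq
    by_cases hi0 : i = 0
    · subst hi0
      by_cases hj1 : j = l.length - 1
      · subst hj1
        apply hxy
        rw [← hx, ← hy]
        exact heq
      · have hmem := hC j (by omega) (by omega)
        rw [← heq, hx] at hmem
        exact hxC hmem
    · by_cases hj1 : j = l.length - 1
      · subst hj1
        have hmem := hC i (by omega) (by omega)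
        rw [heq, hy] at hmem
        exact hyC hmem
      · have h0 : 0 < i := by omega
        obtain ⟨l', hl', hlt⟩ := good_surgery hgood (k := i) hij hj (by omega)
          (fun _ => by
            have hadj2 : G.Adj (l[i-1]'(by omega)) (l[i]'(by omega)) := by
              convert hadj (i-1) (by omega) using 2
              omega
            exact heq ▸ hadj2)
          (fun hk => absurd hk (by omega))
        exact hminl l' hl' (by omega) (by omega)

/-! ### minimal separators in chordal graphs are cliques, with common neighbors in components -/

lemma sep_clique (hch : Chordal G) {u' v' x y : V} {S : Set V}
    (hmin : IsMinimalUVSeparator G u' v' S) (hx : x ∈ S) (hy : y ∈ S) (hxy : x ≠ y) :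
    G.Adj x y := by
  by_contra hnadj
  have hsep : Separates G u' v' S := hmin.2.2.2.2.1
  obtain ⟨c1, hc1r, hc1x⟩ := sep_vertex_neighbor hmin hx
  obtain ⟨c1', hc1'r, hc1'y⟩ := sep_vertex_neighbor hmin hy
  obtain ⟨c2, hc2r, hc2x⟩ := sep_vertex_neighbor hmin.symm hx
  obtain ⟨c2', hc2'r, hc2'y⟩ := sep_vertex_neighbor hmin.symm hy
  have hxC1 : x ∉ {z | Reach G S u' z} := fun h => Reach.not_mem h hx
  have hyC1 : y ∉ {z | Reach G S u' z} := fun h => Reach.not_mem h hy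
  have hxC2 : x ∉ {z | Reach G S v' z} := fun h => Reach.not_mem h hx
  have hyC2 : y ∉ {z | Reach G S v' z} := fun h => Reach.not_mem h hy
  obtain ⟨l1, ⟨hg1, h31⟩, hch1, hnd1⟩ := exists_min_good3 hxy hxC1 hyC1
    (exists_good hc1r hc1x hc1'r hc1'y)
  obtain ⟨l2, ⟨hg2, h32⟩, hch2, hnd2⟩ := exists_min_good3 hxy hxC2 hyC2
    (exists_good hc2r hc2x hc2'r hc2'y)
  obtain ⟨h21, hx1, hy1, hC1, hadj1⟩ := hg1
  obtain ⟨h22, hx2, hy2, hC2, hadj2⟩ := hg2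
  set n1 := l1.length with hn1
  set n2 := l2.length with hn2
  -- cross-component facts
  have hcross_ne : ∀ i s (hi : i < n1) (hs : s < n2), 0 < i → i < n1 - 1 → 0 < s →
      s < n2 - 1 → l1[i] ≠ l2[s] := by
    intro i s hi hs h1 h2 h3 h4 heq
    exact sep_reach hsep (hC1 i h1 h2) (heq ▸ hC2 s h3 h4)
  have hcross_nadj : ∀ i s (hi : i < n1) (hs : s < n2), 0 < i → i < n1 - 1 → 0 < s →
      s < n2 - 1 → ¬ G.Adj l1[i] l2[s] := by
    intro i s hi hs h1 h2 h3 h4 hadj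
    exact sep_reach_adj hsep (hC1 i h1 h2) (hC2 s h3 h4) hadj
  -- the cycle list
  set t : List V := ((l2.drop 1).dropLast).reverse with ht
  set L : List V := l1 ++ t with hL
  have htlen : t.length = n2 - 2 := by simp [ht]; omega
  have hLlen : L.length = n1 + (n2 - 2) := by simp [hL, htlen]; rfl
  have hL1 : ∀ i (hi : i < n1) (h : i < L.length), L[i] = l1[i] := by
    intro i hi h
    exact List.getElem_append_left hi
  have hL2 : ∀ i (hi : n1 ≤ i) (h : i < L.length),
      L[i] = l2[n2 - 2 - (i - n1)]'(by omega) := by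
    intro i hi h
    rw [List.getElem_append_right (by omega : l1.length ≤ i)]
    rw [List.getElem_reverse]
    rw [List.getElem_dropLast]
    rw [List.getElem_drop ..]
    exact gei (by simp [htlen]; omega) (by simp; omega)
  apply chordal_no_cycle hch L (by omega)
  · -- nodup
    intro i j hj hij
    rcases Nat.lt_or_ge j n1 with hj1 | hj1
    · rw [hL1 i (by omega) (by omega), hL1 j (by omega) (by omega)]
      exact hnd1 i j (by omega) hij
    · rcases Nat.lt_or_ge i n1 with hi1 | hi1
      · -- i in l1 part, j in l2 part
        rw [hL1 i (by omega) (by omega), hL2 j (by omega) (by omega)]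
        set s := n2 - 2 - (j - n1) with hs
        have hs1 : 1 ≤ s ∧ s ≤ n2 - 2 := by omega
        rcases Nat.eq_zero_or_pos i with rfl | h0
        · -- l1[0] = x = l2[0]
          rw [hx1, ← hx2]
          intro heq
          exact hnd2 0 s (by omega) (by omega) heq
        · rcases Nat.lt_or_ge i (n1 - 1) with hi2 | hi2
          · exact hcross_ne i s (by omega) (by omega) h0 hi2 (by omega) (by omega)
          · -- i = n1 - 1 : l1[i] = y = l2[n2-1]
            have : i = n1 - 1 := by omega
            rw [gei this, hy1, ← hy2]
            intro heq
            exact hnd2 s (n2-1) (by omega) (by omega) heq.symm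
      · -- both in l2 part
        rw [hL2 i (by omega) (by omega), hL2 j (by omega) (by omega)]
        intro heq
        exact hnd2 (n2 - 2 - (j - n1)) (n2 - 2 - (i - n1)) (by omega) (by omega) heq.symm
  · -- consecutive adjacency
    intro i hi
    rcases Nat.lt_or_ge (i+1) n1 with hi1 | hi1
    · rw [hL1 i (by omega) (by omega), hL1 (i+1) (by omega) (by omega)]
      exact hadj1 i (by omega)
    · rcases Nat.lt_or_ge i n1 with hi2 | hi2
      · -- i = n1 - 1, junction: y to l2[n2-2]
        have hieq : i = n1 - 1 := by omega
        rw [hL1 i (by omega) (by omega), hL2 (i+1) (by omega) (by omega)]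
        rw [gei hieq, hy1, ← hy2]
        have := hadj2 (n2 - 2 - (i + 1 - n1)) (by omega)
        have h2eq : n2 - 2 - (i + 1 - n1) + 1 = n2 - 1 := by omega
        rw [gei h2eq] at this
        exact this.symm
      · rw [hL2 i (by omega) (by omega), hL2 (i+1) (by omega) (by omega)]
        have := hadj2 (n2 - 2 - (i + 1 - n1)) (by omega)
        have h2eq : n2 - 2 - (i + 1 - n1) + 1 = n2 - 2 - (i - n1) := by omega
        rw [gei h2eq] at this
        exact this.symm
  · -- wrap adjacency : L[n-1] = l2[1], L[0] = x = l2[0]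
    rw [hL2 (L.length - 1) (by omega) (by omega), hL1 0 (by omega) (by omega)]
    rw [gei (show n2 - 2 - (L.length - 1 - n1) = 1 by omega), hx1, ← hx2]
    exact (hadj2 0 (by omega)).symm
  · -- chordless
    intro i j hj hij hne hwrap
    rcases Nat.lt_or_ge j n1 with hj1 | hj1
    · rw [hL1 i (by omega) (by omega), hL1 j (by omega) (by omega)]
      by_cases hp : i = 0 ∧ j = n1 - 1
      · -- the x-y pair
        rw [gei hp.1, gei hp.2, hx1, hy1]
        exact hnadj
      · exact hch1 i j (by omega) hij hne hp
    · rcases Nat.lt_or_ge i n1 with hi1 | hi1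
      · rw [hL1 i (by omega) (by omega), hL2 j (by omega) (by omega)]
        set s := n2 - 2 - (j - n1) with hs
        have hs1 : 1 ≤ s ∧ s ≤ n2 - 2 := by omega
        rcases Nat.eq_zero_or_pos i with rfl | h0
        · -- x vs l2[s] ; s = 1 is excluded by the wrap exclusion
          have hsne : s ≠ 1 := by
            intro h1
            exact hwrap ⟨rfl, by omega⟩
          rw [hx1, ← hx2]
          exact hch2 0 s (by omega) (by omega) (by omega) (by omega)
        · rcases Nat.lt_or_ge i (n1 - 1) with hi2 | hi2
          · exact hcross_nadj i s (by omega) (by omega) h0 hi2 (by omega) (by omega)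
          · -- y vs l2[s] : s = n2 - 2 is excluded since j ≠ i+1
            have : i = n1 - 1 := by omega
            have hsne : s ≠ n2 - 2 := by
              intro h1
              exact hne (by omega)
            rw [gei this, hy1, ← hy2]
            intro hadj'
            exact hch2 s (n2 - 1) (by omega) (by omega) (by omega) (by omega) hadj'.symm
      · -- both in l2 part
        rw [hL2 i (by omega) (by omega), hL2 j (by omega) (by omega)]
        intro hadj'
        exact hch2 (n2 - 2 - (j - n1)) (n2 - 2 - (i - n1)) (by omega) (by omega)
          (by omega) (by omega) hadj'.symm

lemma sep_common_neighbor (hch : Chordal G) {u' v' x y : V} {S : Set V}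
    (hmin : IsMinimalUVSeparator G u' v' S) (hx : x ∈ S) (hy : y ∈ S) (hxy : x ≠ y) :
    ∃ a, Reach G S u' a ∧ G.Adj a x ∧ G.Adj a y := by
  obtain ⟨c1, hc1r, hc1x⟩ := sep_vertex_neighbor hmin hx
  obtain ⟨c1', hc1'r, hc1'y⟩ := sep_vertex_neighbor hmin hy
  have hxC1 : x ∉ {z | Reach G S u' z} := fun h => Reach.not_mem h hx
  have hyC1 : y ∉ {z | Reach G S u' z} := fun h => Reach.not_mem h hy
  obtain ⟨l, ⟨hg, h3⟩, hchord, hnd⟩ := exists_min_good3 hxy hxC1 hyC1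
    (exists_good hc1r hc1x hc1'r hc1'y)
  obtain ⟨h2, hx1, hy1, hC, hadj⟩ := hg
  rcases Nat.lt_or_ge l.length 4 with h4 | h4
  · -- length exactly 3 : middle vertex works
    have hlen : l.length = 3 := by omega
    refine ⟨l[1]'(by omega), hC 1 (by omega) (by omega), ?_, ?_⟩
    · have := hadj 0 (by omega)
      rw [hx1] at this
      exact this.symm
    · have := hadj 1 (by omega)
      rw [gei (show (1:ℕ)+1 = l.length - 1 by omega), hy1] at this
      exact this
  · -- length ≥ 4 : chordless cycle, contradiction
    exfalso
    have hadjxy : G.Adj x y := sep_clique hch hmin hx hy hxy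
    apply chordal_no_cycle hch l h4 hnd hadj
    · rw [hy1, hx1]
      exact hadjxy.symm
    · intro i j hj hij hne hw
      exact hchord i j hj hij hne hw

end AuxSection

instance : DecidableRel gem.Adj := fun a b =>
  decidable_of_iff _ (SimpleGraph.fromRel_adj _ a b).symm
instance : DecidableRel dart.Adj := fun a b =>
  decidable_of_iff _ (SimpleGraph.fromRel_adj _ a b).symm

section Configs
variable {V : Type*} {G : SimpleGraph V}

lemma gem_config (hgem : FreeOf G gem) {x y a b c : V}
    (hadjxy : G.Adj x y) (hax : G.Adj a x) (hay : G.Adj a y) (hbx : G.Adj b x)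
    (hby : G.Adj b y) (hcx : G.Adj c x) (hca : G.Adj c a)
    (nab : ¬ G.Adj a b) (ncy : ¬ G.Adj c y) (ncb : ¬ G.Adj c b)
    (nxb : x ≠ b) (nxc : x ≠ c) (nyb : y ≠ b) (nyc : y ≠ c) (nabne : a ≠ b) (nbc : b ≠ c) :
    False := by
  have nxy : x ≠ y := G.ne_of_adj hadjxy
  have nxa : x ≠ a := (G.ne_of_adj hax).symm
  have nya : y ≠ a := (G.ne_of_adj hay).symm
  have nac : a ≠ c := (G.ne_of_adj hca).symm
  apply hgem
  refine ⟨⟨![c,a,y,b,x], ?_⟩, ?_⟩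
  · intro i j h
    have nxy' := nxy.symm; have nxa' := nxa.symm; have nya' := nya.symm
    have nac' := nac.symm; have nxb' := nxb.symm; have nxc' := nxc.symm
    have nyb' := nyb.symm; have nyc' := nyc.symm; have nabne' := nabne.symm
    have nbc' := nbc.symm
    fin_cases i <;> fin_cases j <;>
      simp only [Matrix.cons_val_zero, Matrix.cons_val_one, Matrix.head_cons,
        Matrix.cons_val_two, Matrix.vecTail, Matrix.cons_val_three, Matrix.cons_val_four,
        Matrix.vecHead, Function.comp_apply] at h <;>
      first
        | rfl
        | exact absurd h ‹_›
  · have e1 := hca; have e1' := hca.symm; have e2 := hay; have e2' := hay.symm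
    have e3 := hby.symm; have e3' := hby; have e4 := hcx.symm; have e4' := hcx
    have e5 := hax.symm; have e5' := hax; have e6 := hadjxy; have e6' := hadjxy.symm
    have e7 := hbx.symm; have e7' := hbx
    have n1 := ncy; have n1' : ¬ G.Adj y c := fun h => ncy h.symm
    have n2 := ncb; have n2' : ¬ G.Adj b c := fun h => ncb h.symm
    have n3 := nab; have n3' : ¬ G.Adj b a := fun h => nab h.symm
    intro i j
    fin_cases i <;> fin_cases j <;>
      simp only [Matrix.cons_val_zero, Matrix.cons_val_one, Matrix.head_cons,
        Matrix.cons_val_two, Matrix.vecTail, Matrix.cons_val_three, Matrix.cons_val_four,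
        Matrix.vecHead, Function.comp_apply] <;>
      first
        | exact iff_of_false (by decide) (G.irrefl)
        | exact iff_of_true (by decide) ‹_›
        | exact iff_of_false (by decide) ‹_›

lemma dart_config (hdart : FreeOf G dart) {x y a b c : V}
    (hadjxy : G.Adj x y) (hax : G.Adj a x) (hay : G.Adj a y) (hbx : G.Adj b x)
    (hby : G.Adj b y) (hcx : G.Adj c x)
    (nab : ¬ G.Adj a b) (ncy : ¬ G.Adj c y) (nca : ¬ G.Adj c a) (ncb : ¬ G.Adj c b)
    (nxb : x ≠ b) (nyb : y ≠ b) (nyc : y ≠ c) (nabne : a ≠ b) (nac : a ≠ c) (nbc : b ≠ c) :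
    False := by
  have nxy : x ≠ y := G.ne_of_adj hadjxy
  have nxa : x ≠ a := (G.ne_of_adj hax).symm
  have nya : y ≠ a := (G.ne_of_adj hay).symm
  have nxc : x ≠ c := (G.ne_of_adj hcx).symm
  apply hdart
  refine ⟨⟨![x,y,a,b,c], ?_⟩, ?_⟩
  · intro i j h
    have nxy' := nxy.symm; have nxa' := nxa.symm; have nya' := nya.symm
    have nac' := nac.symm; have nxb' := nxb.symm; have nxc' := nxc.symm
    have nyb' := nyb.symm; have nyc' := nyc.symm; have nabne' := nabne.symm
    have nbc' := nbc.symm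
    fin_cases i <;> fin_cases j <;>
      simp only [Matrix.cons_val_zero, Matrix.cons_val_one, Matrix.head_cons,
        Matrix.cons_val_two, Matrix.vecTail, Matrix.cons_val_three, Matrix.cons_val_four,
        Matrix.vecHead, Function.comp_apply] at h <;>
      first
        | rfl
        | exact absurd h ‹_›
  · have e1 := hadjxy; have e1' := hadjxy.symm
    have e2 := hax.symm; have e2' := hax
    have e3 := hbx.symm; have e3' := hbx
    have e4 := hay.symm; have e4' := hay
    have e5 := hby.symm; have e5' := hby
    have e6 := hcx; have e6' := hcx.symm
    have n1 := nab; have n1' : ¬ G.Adj b a := fun h => nab h.symm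
    have n2 := ncy; have n2' : ¬ G.Adj y c := fun h => ncy h.symm
    have n3 := nca; have n3' : ¬ G.Adj a c := fun h => nca h.symm
    have n4 := ncb; have n4' : ¬ G.Adj b c := fun h => ncb h.symm
    intro i j
    fin_cases i <;> fin_cases j <;>
      simp only [Matrix.cons_val_zero, Matrix.cons_val_one, Matrix.head_cons,
        Matrix.cons_val_two, Matrix.vecTail, Matrix.cons_val_three, Matrix.cons_val_four,
        Matrix.vecHead, Function.comp_apply] <;>
      first
        | exact iff_of_false (by decide) (G.irrefl)
        | exact iff_of_true (by decide) ‹_›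
        | exact iff_of_false (by decide) ‹_›

lemma c4_config (hch : Chordal G) {c a y b : V}
    (e1 : G.Adj c a) (e2 : G.Adj a y) (e3 : G.Adj y b) (e4 : G.Adj b c)
    (n1 : ¬ G.Adj c y) (n2 : ¬ G.Adj a b) (ncy : c ≠ y) (nab : a ≠ b) : False := by
  have nca : c ≠ a := G.ne_of_adj e1
  have nay : a ≠ y := G.ne_of_adj e2
  have nyb : y ≠ b := G.ne_of_adj e3
  have nbc : b ≠ c := G.ne_of_adj e4
  apply hch 4 (le_refl 4)
  refine ⟨⟨![c,a,y,b], ?_⟩, ?_⟩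
  · intro i j h
    have nca' := nca.symm; have nay' := nay.symm; have nyb' := nyb.symm
    have nbc' := nbc.symm; have ncy' := ncy.symm; have nab' := nab.symm
    fin_cases i <;> fin_cases j <;>
      simp only [Matrix.cons_val_zero, Matrix.cons_val_one, Matrix.head_cons,
        Matrix.cons_val_two, Matrix.vecTail, Matrix.cons_val_three,
        Matrix.vecHead, Function.comp_apply] at h <;>
      first
        | rfl
        | exact absurd h ‹_›
  · have e1' := e1.symm; have e2' := e2.symm; have e3' := e3.symm; have e4' := e4.symm
    have n1' : ¬ G.Adj y c := fun h => n1 h.symm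
    have n2' : ¬ G.Adj b a := fun h => n2 h.symm
    intro i j
    fin_cases i <;> fin_cases j <;>
      simp only [Matrix.cons_val_zero, Matrix.cons_val_one, Matrix.head_cons,
        Matrix.cons_val_two, Matrix.vecTail, Matrix.cons_val_three,
        Matrix.vecHead, Function.comp_apply] <;>
      first
        | exact iff_of_false (by decide) (G.irrefl)
        | exact iff_of_true (by decide) ‹_›
        | exact iff_of_false (by decide) ‹_›

end Configs

section Main
variable {V : Type*} {G : SimpleGraph V}

lemma config2 (hch : Chordal G) (hgem : FreeOf G gem) (hdart : FreeOf G dart)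
    {u v u' v' x y : V} {S S' : Set V}
    (hS : IsMinimalUVSeparator G u v S) (hS' : IsMinimalUVSeparator G u' v' S')
    (hxS : x ∈ S) (hxS' : x ∈ S') (hyS' : y ∈ S') (hyS : y ∉ S)
    (hyu : ¬ Reach G S u y) : False := by
  have hxy : x ≠ y := fun h => hyS (h ▸ hxS)
  have hadjxy : G.Adj x y := sep_clique hch hS' hxS' hyS' hxy
  obtain ⟨a, har, hax, hay⟩ := sep_common_neighbor hch hS' hxS' hyS' hxy
  obtain ⟨b, hbr, hbx, hby⟩ := sep_common_neighbor hch hS'.symm hxS' hyS' hxy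
  have hsep' : Separates G u' v' S' := hS'.2.2.2.2.1
  have hab_ne : a ≠ b := fun h => sep_reach hsep' har (h ▸ hbr)
  have hab_nadj : ¬ G.Adj a b := fun h => sep_reach_adj hsep' har hbr h
  obtain ⟨c, hcr, hcx⟩ := sep_vertex_neighbor hS hxS
  have hcS : c ∉ S := hcr.not_mem
  have hcy_ne : c ≠ y := fun h => hyu (h ▸ hcr)
  have hcy_nadj : ¬ G.Adj c y := fun h => hyu (hcr.adj h hyS)
  have hca_ne : c ≠ a := fun h => hyu (((h ▸ hcr : Reach G S u a)).adj hay hyS)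
  have hcb_ne : c ≠ b := fun h => hyu (((h ▸ hcr : Reach G S u b)).adj hby hyS)
  have hxc : x ≠ c := fun h => hcS (h ▸ hxS)
  have hxa : x ≠ a := fun h => har.not_mem (h ▸ hxS')
  have hxb : x ≠ b := fun h => hbr.not_mem (h ▸ hxS')
  have hya : y ≠ a := fun h => har.not_mem (h ▸ hyS')
  have hyb : y ≠ b := fun h => hbr.not_mem (h ▸ hyS')
  by_cases hca : G.Adj c a
  · by_cases hcb : G.Adj c b
    · -- C4 : c a? cycle c - a - ? need y between: c-a? use cycle a-c-b-y-a? earlier plan: c,a,y,b? 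
      -- edges: c~a, a~y, y~b, b~c
      exact c4_config hch hca hay hby.symm hcb.symm hcy_nadj hab_nadj hcy_ne hab_ne
    · exact gem_config hgem hadjxy hax hay hbx hby hcx hca hab_nadj hcy_nadj hcb
        hxb hxc hyb hcy_ne.symm hab_ne hcb_ne.symm
  · by_cases hcb : G.Adj c b
    · exact gem_config hgem hadjxy hbx hby hax hay hcx hcb
        (fun h => hab_nadj h.symm) hcy_nadj hca
        hxa hxc hya hcy_ne.symm hab_ne.symm hca_ne.symm
    · exact dart_config hdart hadjxy hax hay hbx hby hcx
        hab_nadj hcy_nadj hca hcb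
        hxb hyb hcy_ne.symm hab_ne hca_ne.symm hcb_ne.symm
end Main

section Main2
variable {V : Type*} {G : SimpleGraph V}

lemma config (hch : Chordal G) (hgem : FreeOf G gem) (hdart : FreeOf G dart)
    {u v u' v' x y : V} {S S' : Set V}
    (hS : IsMinimalUVSeparator G u v S) (hS' : IsMinimalUVSeparator G u' v' S')
    (hxS : x ∈ S) (hxS' : x ∈ S') (hyS' : y ∈ S') (hyS : y ∉ S) : False := by
  by_cases hr : Reach G S u y
  · have hyv : ¬ Reach G S v y := fun h2 => sep_reach hS.2.2.2.2.1 hr h2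
    exact config2 hch hgem hdart hS.symm hS' hxS hxS' hyS' hyS hyv
  · exact config2 hch hgem hdart hS hS' hxS hxS' hyS' hyS hr

lemma hard_direction (hch : Chordal G) (hgem : FreeOf G gem) (hdart : FreeOf G dart) :
    ∀ S S' : Set V, IsMinimalVertexSeparator G S → IsMinimalVertexSeparator G S' →
      S ≠ S' → Disjoint S S' := by
  intro S S' hS hS' hne
  by_contra hnd
  rw [Set.not_disjoint_iff] at hnd
  obtain ⟨x, hxS, hxS'⟩ := hnd
  obtain ⟨u, v, hSm⟩ := hS
  obtain ⟨u', v', hS'm⟩ := hS'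
  by_cases hss : S' ⊆ S
  · have hex : ∃ y, y ∈ S ∧ y ∉ S' := by
      by_contra h
      push_neg at h
      exact hne (Set.Subset.antisymm (fun z hz => h z hz) hss)
    obtain ⟨y, h1, h2⟩ := hex
    exact config hch hgem hdart hS'm hSm hxS' hxS h1 h2
  · obtain ⟨y, hyS', hyS⟩ := Set.not_subset.1 hss
    exact config hch hgem hdart hSm hS'm hxS hxS' hyS' hyS

lemma easy_gem (hdisj : ∀ S S' : Set V, IsMinimalVertexSeparator G S →
    IsMinimalVertexSeparator G S' → S ≠ S' → Disjoint S S') : FreeOf G gem := by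
  rintro ⟨f, hf⟩
  set p0 := f 0; set p1 := f 1; set p2 := f 2; set p3 := f 3; set w := f 4
  have a01 : G.Adj p0 p1 := (hf 0 1).1 (by decide)
  have a12 : G.Adj p1 p2 := (hf 1 2).1 (by decide)
  have a40 : G.Adj w p0 := (hf 4 0).1 (by decide)
  have a42 : G.Adj w p2 := (hf 4 2).1 (by decide)
  have a43 : G.Adj w p3 := (hf 4 3).1 (by decide)
  have n02 : ¬ G.Adj p0 p2 := fun h => (by decide : ¬ gem.Adj 0 2) ((hf 0 2).2 h)
  have n03 : ¬ G.Adj p0 p3 := fun h => (by decide : ¬ gem.Adj 0 3) ((hf 0 3).2 h)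
  have n31 : ¬ G.Adj p3 p1 := fun h => (by decide : ¬ gem.Adj 3 1) ((hf 3 1).2 h)
  have ne02 : p0 ≠ p2 := f.injective.ne (by decide)
  have ne03 : p0 ≠ p3 := f.injective.ne (by decide)
  obtain ⟨S, hSsub, hSmin⟩ := exists_minimal_separator ne02 n02
    (neighborSet_separates ne02 n02) (fun h => n02 (SimpleGraph.Adj.symm h))
    (fun h => G.irrefl h)
  obtain ⟨S', hS'sub, hS'min⟩ := exists_minimal_separator ne03 n03
    (neighborSet_separates ne03 n03) (fun h => n03 (SimpleGraph.Adj.symm h))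
    (fun h => G.irrefl h)
  have hp1S : p1 ∈ S :=
    common_neighbor_mem hSmin.2.2.2.2.1 hSmin.2.2.1 hSmin.2.2.2.1 a01 a12
  have hwS : w ∈ S :=
    common_neighbor_mem hSmin.2.2.2.2.1 hSmin.2.2.1 hSmin.2.2.2.1 a40.symm a42
  have hwS' : w ∈ S' :=
    common_neighbor_mem hS'min.2.2.2.2.1 hS'min.2.2.1 hS'min.2.2.2.1 a40.symm a43
  have hp1S' : p1 ∉ S' := fun h => n31 (hS'sub h)
  have hne : S ≠ S' := fun h => hp1S' (h ▸ hp1S)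
  have hd := hdisj S S' ⟨p0, p2, hSmin⟩ ⟨p0, p3, hS'min⟩ hne
  exact Set.disjoint_left.1 hd hwS hwS'

lemma easy_dart (hdisj : ∀ S S' : Set V, IsMinimalVertexSeparator G S →
    IsMinimalVertexSeparator G S' → S ≠ S' → Disjoint S S') : FreeOf G dart := by
  rintro ⟨f, hf⟩
  set x := f 0; set y := f 1; set a := f 2; set b := f 3; set c := f 4
  have a01 : G.Adj x y := (hf 0 1).1 (by decide)
  have a02 : G.Adj x a := (hf 0 2).1 (by decide)
  have a03 : G.Adj x b := (hf 0 3).1 (by decide)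
  have a12 : G.Adj y a := (hf 1 2).1 (by decide)
  have a13 : G.Adj y b := (hf 1 3).1 (by decide)
  have a40 : G.Adj c x := (hf 4 0).1 (by decide)
  have n23 : ¬ G.Adj a b := fun h => (by decide : ¬ dart.Adj 2 3) ((hf 2 3).2 h)
  have n41 : ¬ G.Adj c y := fun h => (by decide : ¬ dart.Adj 4 1) ((hf 4 1).2 h)
  have n24 : ¬ G.Adj a c := fun h => (by decide : ¬ dart.Adj 2 4) ((hf 2 4).2 h)
  have ne23 : a ≠ b := f.injective.ne (by decide)
  have ne24 : a ≠ c := f.injective.ne (by decide)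
  obtain ⟨S, hSsub, hSmin⟩ := exists_minimal_separator ne23 n23
    (neighborSet_separates ne23 n23) (fun h => n23 (SimpleGraph.Adj.symm h))
    (fun h => G.irrefl h)
  obtain ⟨S', hS'sub, hS'min⟩ := exists_minimal_separator ne24 n24
    (neighborSet_separates ne24 n24) (fun h => n24 (SimpleGraph.Adj.symm h))
    (fun h => G.irrefl h)
  have hxS : x ∈ S :=
    common_neighbor_mem hSmin.2.2.2.2.1 hSmin.2.2.1 hSmin.2.2.2.1 a02.symm a03
  have hyS : y ∈ S :=
    common_neighbor_mem hSmin.2.2.2.2.1 hSmin.2.2.1 hSmin.2.2.2.1 a12.symm a13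
  have hxS' : x ∈ S' :=
    common_neighbor_mem hS'min.2.2.2.2.1 hS'min.2.2.1 hS'min.2.2.2.1 a02.symm a40.symm
  have hyS' : y ∉ S' := fun h => n41 (hS'sub h)
  have hne : S ≠ S' := fun h => hyS' (h ▸ hyS)
  have hd := hdisj S S' ⟨a, b, hSmin⟩ ⟨a, c, hS'min⟩ hne
  exact Set.disjoint_left.1 hd hxS hxS'

end Main2

/-- A chordal graph is gem-free and dart-free iff any two distinct minimal vertex
separators are disjoint. -/
theorem stmt_9 {V : Type*} (G : SimpleGraph V) (hch : Chordal G) :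
    (FreeOf G gem ∧ FreeOf G dart) ↔
      ∀ S S' : Set V, IsMinimalVertexSeparator G S → IsMinimalVertexSeparator G S' →
        S ≠ S' → Disjoint S S' := by
  constructor
  · rintro ⟨hgem, hdart⟩
    exact hard_direction hch hgem hdart
  · intro hdisj
    exact ⟨easy_gem hdisj, easy_dart hdisj⟩
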